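/- Let p, q be coprime positive integers and F(X,Y) = C_p(X) − C_q(Y). At a point (X,Y) = (2cos(aπ/p), 2cos(bπ/q)) with 0 < a < p, 0 < b < q and a ≡ b (mod 2), the Hessian determinant of F equals −p²q²/(4 sin²(aπ/p) sin²(bπ/q)). -/

import Mathlib

open Real
open Polynomial Polynomial.Chebyshev

/-- Normalized Chebyshev polynomials of the first kind. -/
noncomputable def Ccheb : ℕ → ℂ → ℂ
  | 0, _ => 2
  | 1, z => z
  | (n + 2), z => z * Ccheb (n + 1) z - Ccheb n z

/-- The Hessian determinant of `F(X,Y) = C_p(X) - C_q(Y)`, namely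
`F_XX · F_YY - F_XY² = C_p''(X) · (-C_q''(Y))`, at the singular points. -/

lemma Ccheb_eq : ∀ (n : ℕ) (z : ℂ), Ccheb n z = 2 * (T ℂ n).eval (z / 2)
  | 0, z => by simp [Ccheb]
  | 1, z => by simp [Ccheb]; ring
  | (n + 2), z => by
    rw [Ccheb, Ccheb_eq (n + 1), Ccheb_eq n]
    have h2 : ((n + 2 : ℕ) : ℤ) = (n : ℤ) + 2 := by push_cast; ring
    have h1 : ((n + 1 : ℕ) : ℤ) = (n : ℤ) + 1 := by push_cast; ring
    rw [h2, h1, T_add_two ℂ (n : ℤ)]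
    simp [eval_mul, eval_sub]
    ring

lemma T_second_deriv_identity (n : ℤ) :
    (1 - X ^ 2) * derivative (derivative (T ℂ n)) =
      X * derivative (T ℂ n) - (n : ℂ[X]) ^ 2 * T ℂ n := by
  have h1 := T_derivative_eq_U (R := ℂ) n
  have h2 := congr_arg derivative h1
  have h3 := add_one_mul_T_eq_poly_in_U (R := ℂ) (n - 1)
  simp only [derivative_mul, derivative_intCast, zero_mul, zero_add,
    sub_add_cancel] at h2 h3
  linear_combination (norm := (push_cast; ring_nf)) (1 - (X : ℂ[X]) ^ 2) * h2 + (n : ℂ[X]) * h3 -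
    (X : ℂ[X]) * h1

lemma poly_deriv2 (P : ℂ[X]) (x : ℂ) :
    deriv (deriv (fun z => P.eval z)) x = (derivative (derivative P)).eval x := by
  have h : deriv (fun z => P.eval z) = fun z => (derivative P).eval z :=
    funext fun z => P.deriv
  rw [h]
  exact (derivative P).deriv

lemma Ccheb_deriv2 (n : ℕ) (x : ℂ) :
    deriv (deriv (Ccheb n)) x
      = 2⁻¹ * (derivative (derivative (T ℂ (n : ℤ)))).eval (x / 2) := by
  have hfun : Ccheb n = fun z => ((2 : ℂ[X]) * (T ℂ (n:ℤ)).comp (C (2⁻¹ : ℂ) * X)).eval z := by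
    funext z
    rw [Ccheb_eq]
    have hz : z / 2 = 2⁻¹ * z := by ring
    rw [hz]
    simp only [eval_mul, eval_ofNat, eval_comp, eval_C, eval_X]
  rw [hfun, poly_deriv2]
  have hD : derivative (derivative ((2 : ℂ[X]) * (T ℂ (n:ℤ)).comp (C (2⁻¹ : ℂ) * X)))
      = C (2⁻¹ : ℂ) * (derivative (derivative (T ℂ (n:ℤ)))).comp (C (2⁻¹ : ℂ) * X) := by
    simp only [derivative_mul, derivative_comp, derivative_C, derivative_ofNat,
      derivative_X, zero_mul, zero_add, mul_one, mul_zero, add_zero]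
    ring_nf
    rw [← map_pow, show ((2 : ℂ[X]) = Polynomial.C (2 : ℂ)) from (map_ofNat Polynomial.C 2).symm]
    rw [mul_comm (Polynomial.C ((1/2:ℂ)^2)) _, mul_assoc, ← map_mul]
    norm_num
    ring
  rw [hD]
  have hx : x / 2 = 2⁻¹ * x := by ring
  rw [hx]
  simp only [eval_mul, eval_C, eval_comp, eval_X]

lemma Ccheb_deriv2_value (n a : ℕ) (hn : 0 < n) (ha0 : 0 < a) (han : a < n) :
    deriv (deriv (Ccheb n)) ((2 * Real.cos (a * π / n) : ℝ) : ℂ)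
      = -((n : ℂ) ^ 2 * (-1) ^ a) / (2 * ((Real.sin (a * π / n) : ℝ) : ℂ) ^ 2) := by
  rw [Ccheb_deriv2]
  set t : ℝ := a * π / n with ht
  have hnR : (0 : ℝ) < n := by exact_mod_cast hn
  have htpos : 0 < t :=
    div_pos (mul_pos (by exact_mod_cast ha0) Real.pi_pos) hnR
  have htlt : t < π := by
    rw [ht, div_lt_iff₀ hnR]
    have : (a : ℝ) < n := by exact_mod_cast han
    nlinarith [Real.pi_pos]
  have hs0 : Real.sin t ≠ 0 := ne_of_gt (Real.sin_pos_of_pos_of_lt_pi htpos htlt)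
  have hx : (((2 * Real.cos t : ℝ) : ℂ)) / 2 = Complex.cos (t : ℂ) := by
    rw [← Complex.ofReal_cos]; push_cast; ring
  rw [hx]
  have hsC : Complex.sin (t : ℂ) = ((Real.sin t : ℝ) : ℂ) := (Complex.ofReal_sin t).symm
  have hsne : Complex.sin (t : ℂ) ≠ 0 := by
    rw [hsC]; exact_mod_cast hs0
  have hntR : (n : ℝ) * t = a * π := by rw [ht, mul_div_assoc']; exact mul_div_cancel_left₀ _ hnR.ne'
  have hntC : (n : ℂ) * (t : ℂ) = ((a * π : ℝ) : ℂ) := by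
    rw [← hntR]; push_cast; ring
  have hcosR : Real.cos (a * π) = (-1) ^ a := by
    simpa using Real.cos_add_nat_mul_pi 0 a
  have hcos : Complex.cos ((n : ℂ) * (t : ℂ)) = (-1) ^ a := by
    rw [hntC, ← Complex.ofReal_cos, hcosR]; push_cast; ring
  have hsin : Complex.sin ((n : ℂ) * (t : ℂ)) = 0 := by
    rw [hntC, ← Complex.ofReal_sin, Real.sin_nat_mul_pi]; simp
  have hid := congr_arg (eval (Complex.cos (t : ℂ))) (T_second_deriv_identity (n : ℤ))
  simp only [eval_mul, eval_sub, eval_one, eval_pow, eval_X, eval_intCast] at hid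
  push_cast at hid
  have hU := U_complex_cos (t : ℂ) ((n : ℤ) - 1)
  push_cast at hU
  rw [sub_add_cancel] at hU
  have hUev : (U ℂ ((n : ℤ) - 1)).eval (Complex.cos (t : ℂ)) = 0 := by
    rcases mul_eq_zero.mp (hU.trans hsin) with h | h
    · exact h
    · exact absurd h hsne
  have hT' : (derivative (T ℂ (n : ℤ))).eval (Complex.cos (t : ℂ)) = 0 := by
    rw [T_derivative_eq_U]
    simp [hUev]
  have hTev : (T ℂ (n : ℤ)).eval (Complex.cos (t : ℂ)) = (-1) ^ a := by
    rw [T_complex_cos]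
    rw [← hcos]
    push_cast
    ring_nf
  rw [hT', hTev] at hid
  have h1c : 1 - Complex.cos (t : ℂ) ^ 2 = Complex.sin (t : ℂ) ^ 2 := by
    linear_combination -Complex.sin_sq_add_cos_sq (t : ℂ)
  rw [← hsC]
  have hs2 : Complex.sin (t : ℂ) ^ 2 ≠ 0 := pow_ne_zero 2 hsne
  field_simp
  linear_combination hid - (derivative (derivative (T ℂ (n : ℤ)))).eval
    (Complex.cos (t : ℂ)) * h1c

theorem chebyshev_curve_hessian (p q : ℕ) (hp : 0 < p) (hq : 0 < q)
    (hpq : Nat.Coprime p q) (a b : ℕ) (ha0 : 0 < a) (hap : a < p)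
    (hb0 : 0 < b) (hbq : b < q) (hparity : a % 2 = b % 2) :
    deriv (deriv (Ccheb p)) ((2 * Real.cos (a * π / p) : ℝ) : ℂ) *
      (-(deriv (deriv (Ccheb q)) ((2 * Real.cos (b * π / q) : ℝ) : ℂ)))
      = -((p : ℂ) ^ 2 * (q : ℂ) ^ 2) /
          (4 * (Real.sin (a * π / p) : ℂ) ^ 2 * (Real.sin (b * π / q) : ℂ) ^ 2) := by
  rw [Ccheb_deriv2_value p a hp ha0 hap, Ccheb_deriv2_value q b hq hb0 hbq]
  have hsa : Real.sin (a * π / p) ≠ 0 := by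
    refine ne_of_gt (Real.sin_pos_of_pos_of_lt_pi ?_ ?_)
    · exact div_pos (mul_pos (by exact_mod_cast ha0) Real.pi_pos) (by exact_mod_cast hp)
    · rw [div_lt_iff₀ (by exact_mod_cast hp)]
      have : (a : ℝ) < p := by exact_mod_cast hap
      nlinarith [Real.pi_pos]
  have hsb : Real.sin (b * π / q) ≠ 0 := by
    refine ne_of_gt (Real.sin_pos_of_pos_of_lt_pi ?_ ?_)
    · exact div_pos (mul_pos (by exact_mod_cast hb0) Real.pi_pos) (by exact_mod_cast hq)
    · rw [div_lt_iff₀ (by exact_mod_cast hq)]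
      have : (b : ℝ) < q := by exact_mod_cast hbq
      nlinarith [Real.pi_pos]
  have hsaC : ((Real.sin (a * π / p) : ℝ) : ℂ) ≠ 0 := by exact_mod_cast hsa
  have hsbC : ((Real.sin (b * π / q) : ℝ) : ℂ) ≠ 0 := by exact_mod_cast hsb
  have hab : ((-1 : ℂ)) ^ a * (-1) ^ b = 1 := by
    rw [← pow_add]
    refine Even.neg_one_pow ?_
    rw [Nat.even_add, Nat.even_iff, Nat.even_iff, hparity]
  generalize ((Real.sin (a * π / p) : ℝ) : ℂ) = S at hsaC ⊢
  generalize ((Real.sin (b * π / q) : ℝ) : ℂ) = Tb at hsbC ⊢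
  field_simp
  linear_combination (-4 * (p : ℂ) ^ 2 * (q : ℂ) ^ 2) * hab
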